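/- arXiv:2410.08497 — 3 statements merged into one kernel-verified Lean document; each statement's English description precedes it below -/
import Mathlib

section
/- If a differentiable function Φ : ℝ^d → ℝ satisfies the Polyak–Łojasiewicz condition with parameter μ > 0 and attains its minimum at x*, then for all x, μ‖x − x*‖ ≤ ‖∇Φ(x)‖ whenever x* is the projection of x onto the solution set; in particular, for a strongly quadratically-growing function (which PL implies), μ·dist(x, argmin Φ) ≤ ‖∇Φ(x)‖. -/
open Filter Topology

/-- A version of Ekeland's variational principle for continuous nonnegative
functions on a complete metric space. -/
lemma ekeland_aux {X : Type*} [MetricSpace X] [CompleteSpace X]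
    (f : X → ℝ) (hf : Continuous f) (h0 : ∀ x, 0 ≤ f x)
    (δ : ℝ) (hδ : 0 < δ) (x₀ : X) :
    ∃ y, f y + δ * dist y x₀ ≤ f x₀ ∧ ∀ z, f y ≤ f z + δ * dist z y := by
  set S : X → Set X := fun x => {z | f z + δ * dist z x ≤ f x} with hSdef
  have hmem : ∀ x, x ∈ S x := by intro x; simp [hSdef]
  have htrans : ∀ x z w, z ∈ S x → w ∈ S z → w ∈ S x := by
    intro x z w hz hw
    simp only [hSdef, Set.mem_setOf_eq] at *
    have htri : dist w x ≤ dist w z + dist z x := dist_triangle w z x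
    nlinarith [hz, hw]
  have hne : ∀ x, (f '' S x).Nonempty := fun x => ⟨f x, x, hmem x, rfl⟩
  have hstep : ∀ (n : ℕ) (x : X), ∃ z, z ∈ S x ∧ f z < sInf (f '' S x) + (1/2)^n := by
    intro n x
    have hpos : sInf (f '' S x) < sInf (f '' S x) + (1/2:ℝ)^n :=
      lt_add_of_pos_right _ (by positivity)
    obtain ⟨_, ⟨z, hz, rfl⟩, hlt⟩ := exists_lt_of_csInf_lt (hne x) hpos
    exact ⟨z, hz, hlt⟩
  let seq : ℕ → X := fun n => Nat.rec x₀ (fun n xn => (hstep n xn).choose) n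
  have hseq0 : seq 0 = x₀ := rfl
  have hseqS : ∀ n, seq (n+1) ∈ S (seq n) := fun n => (hstep n (seq n)).choose_spec.1
  have hseqf : ∀ n, f (seq (n+1)) < sInf (f '' S (seq n)) + (1/2)^n :=
    fun n => (hstep n (seq n)).choose_spec.2
  have hchain : ∀ n m, n ≤ m → seq m ∈ S (seq n) := by
    intro n m h
    induction h with
    | refl => exact hmem _
    | step h ih => exact htrans _ _ _ ih (hseqS _)
  set a : ℕ → ℝ := fun n => f (seq n) with ha
  have hdista : ∀ n m, n ≤ m → δ * dist (seq m) (seq n) ≤ a n - a m := by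
    intro n m h
    have := hchain n m h
    simp only [hSdef, Set.mem_setOf_eq] at this
    simp only [ha]
    linarith
  have hanti : Antitone a := by
    refine antitone_nat_of_succ_le fun n => ?_
    have h1 := hdista n (n+1) (Nat.le_succ n)
    have h2 : 0 ≤ δ * dist (seq (n+1)) (seq n) := by positivity
    linarith
  have hbdd : BddBelow (Set.range a) := ⟨0, by rintro _ ⟨n, rfl⟩; exact h0 _⟩
  set L : ℝ := ⨅ n, a n with hL
  have haL : Tendsto a atTop (𝓝 L) := tendsto_atTop_ciInf hanti hbdd
  have hLle : ∀ n, L ≤ a n := fun n => ciInf_le hbdd n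
  have key : ∀ N p q, N ≤ p → p ≤ q → dist (seq p) (seq q) ≤ (a N - L) / δ := by
    intro N p q hNp hpq
    have h1 := hdista p q hpq
    rw [dist_comm, le_div_iff₀ hδ]
    have h2 : a p ≤ a N := hanti hNp
    have h3 := hLle q
    nlinarith
  have hcauchy : CauchySeq seq := by
    refine cauchySeq_of_le_tendsto_0 (fun N => (a N - L) / δ) (fun n m N hn hm => ?_) ?_
    · rcases le_total n m with h | h
      · exact key N n m hn h
      · rw [dist_comm]; exact key N m n hm h
    · have : Tendsto (fun N => (a N - L) / δ) atTop (𝓝 ((L - L) / δ)) :=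
        (haL.sub tendsto_const_nhds).div_const δ
      simpa using this
  obtain ⟨y, hy⟩ := cauchySeq_tendsto_of_complete hcauchy
  have hySn : ∀ n, y ∈ S (seq n) := by
    intro n
    have h1 : Tendsto (fun m => f (seq m) + δ * dist (seq m) (seq n)) atTop
        (𝓝 (f y + δ * dist y (seq n))) :=
      ((hf.tendsto y).comp hy).add ((hy.dist tendsto_const_nhds).const_mul δ)
    have h2 : ∀ᶠ m in atTop, f (seq m) + δ * dist (seq m) (seq n) ≤ f (seq n) := by
      filter_upwards [eventually_ge_atTop n] with m hm
      exact hchain n m hm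
    exact le_of_tendsto h1 h2
  have hfy : f y = L :=
    tendsto_nhds_unique ((hf.tendsto y).comp hy) haL
  refine ⟨y, ?_, ?_⟩
  · have := hySn 0
    simp only [hSdef, Set.mem_setOf_eq, hseq0] at this
    exact this
  · intro z
    by_cases hz : z ∈ S y
    · have hzn : ∀ n, z ∈ S (seq n) := fun n => htrans _ _ _ (hySn n) hz
      have hLz : L ≤ f z := by
        have h1 : ∀ n, a (n+1) < f z + (1/2:ℝ)^n := by
          intro n
          have h2 : sInf (f '' S (seq n)) ≤ f z :=
            csInf_le ⟨0, by rintro _ ⟨w, hw, rfl⟩; exact h0 w⟩ ⟨z, hzn n, rfl⟩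
          have := hseqf n
          simp only [ha]
          linarith
        have h3 : Tendsto (fun n => a (n+1)) atTop (𝓝 L) :=
          haL.comp (tendsto_add_atTop_nat 1)
        have h4 : Tendsto (fun n : ℕ => f z + (1/2:ℝ)^n) atTop (𝓝 (f z + 0)) :=
          tendsto_const_nhds.add (tendsto_pow_atTop_nhds_zero_of_lt_one (by norm_num) (by norm_num))
        have := le_of_tendsto_of_tendsto' h3 h4 (fun n => (h1 n).le)
        simpa using this
      have hd : 0 ≤ δ * dist z y := by positivity
      rw [hfy]
      linarith
    · simp only [hSdef, Set.mem_setOf_eq, not_le] at hz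
      linarith
open Filter Topology

lemma fderiv_norm_le_of_min {E : Type*} [NormedAddCommGroup E] [NormedSpace ℝ E]
    {g : E → ℝ} {y : E} {D : E →L[ℝ] ℝ} (hD : HasFDerivAt g D y)
    {c : ℝ} (hc : 0 ≤ c) (hmin : ∀ z, g y ≤ g z + c * dist z y) : ‖D‖ ≤ c := by
  have hdir : ∀ v : E, -(c * ‖v‖) ≤ D v := by
    intro v
    have hline : HasDerivAt (fun t : ℝ => g (y + t • v)) (D v) 0 := by
      have h1 : HasDerivAt (fun t : ℝ => y + t • v) v 0 := by
        simpa using ((hasDerivAt_id (0:ℝ)).smul_const v).const_add y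
      have hD' : HasFDerivAt g D (y + (0:ℝ) • v) := by simpa using hD
      exact hD'.comp_hasDerivAt (0:ℝ) h1
    have hslope := hasDerivAt_iff_tendsto_slope.mp hline
    have hslope' : Tendsto (slope (fun t : ℝ => g (y + t • v)) 0) (𝓝[>] 0) (𝓝 (D v)) :=
      hslope.mono_left (nhdsWithin_mono 0 (fun t ht => ne_of_gt ht))
    refine ge_of_tendsto hslope' ?_
    filter_upwards [self_mem_nhdsWithin] with t (ht : 0 < t)
    have hmin' := hmin (y + t • v)
    have hdist : dist (y + t • v) y = t * ‖v‖ := by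
      rw [dist_eq_norm]
      simp [norm_smul, abs_of_pos ht]
    rw [hdist] at hmin'
    rw [slope_def_field]
    simp only [sub_zero, zero_smul, add_zero, div_eq_inv_mul]
    have h2 : -(c * t * ‖v‖) ≤ g (y + t • v) - g y := by linarith
    have h3 := mul_le_mul_of_nonneg_left h2 (inv_pos.mpr ht).le
    have h4 : t⁻¹ * -(c * t * ‖v‖) = -(c * ‖v‖) := by field_simp
    linarith
  refine ContinuousLinearMap.opNorm_le_bound _ hc (fun v => ?_)
  rw [Real.norm_eq_abs, abs_le]
  constructor
  · linarith [hdir v]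
  · have := hdir (-v)
    simp only [map_neg, norm_neg] at this
    linarith

/-- The PL condition with parameter `μ` implies the error-bound property:
`μ · dist(x, argmin Φ) ≤ ‖∇Φ(x)‖`. -/

theorem pl_implies_error_bound
    {d : ℕ} (Φ : EuclideanSpace ℝ (Fin d) → ℝ) (μ : ℝ) (hμ : 0 < μ)
    (hdiff : Differentiable ℝ Φ)
    (xstar : EuclideanSpace ℝ (Fin d)) (hmin : ∀ x, Φ xstar ≤ Φ x)
    (hPL : ∀ x, Φ x - Φ xstar ≤ 1 / (2 * μ) * ‖gradient Φ x‖ ^ 2) :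
    ∀ x, μ * Metric.infDist x {y | ∀ z, Φ y ≤ Φ z} ≤ ‖gradient Φ x‖ := by
  intro x
  set Xs : Set (EuclideanSpace ℝ (Fin d)) := {y | ∀ z, Φ y ≤ Φ z} with hXs
  set g : EuclideanSpace ℝ (Fin d) → ℝ := fun z => Real.sqrt (Φ z - Φ xstar) with hg
  have hgc : Continuous g := (hdiff.continuous.sub continuous_const).sqrt
  have hg0 : ∀ z, 0 ≤ g z := fun z => Real.sqrt_nonneg _
  have hgradnorm : ∀ z, ‖gradient Φ z‖ = ‖fderiv ℝ Φ z‖ := fun z =>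
    (InnerProductSpace.toDual ℝ (EuclideanSpace ℝ (Fin d))).symm.norm_map (fderiv ℝ Φ z)
  by_cases hx : Φ x - Φ xstar ≤ 0
  · have hxX : x ∈ Xs := by
      intro z
      have h1 := hmin z
      have h2 := hmin x
      linarith
    rw [Metric.infDist_zero_of_mem hxX, mul_zero]
    exact norm_nonneg _
  push_neg at hx
  have hgx : 0 < g x := Real.sqrt_pos.mpr hx
  have claim : ∀ c : ℝ, 0 < c → c < Real.sqrt (μ/2) → Metric.infDist x Xs ≤ g x / c := by
    intro c hc hcs
    by_contra hcon
    push_neg at hcon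
    obtain ⟨y, hy1, hy2⟩ := ekeland_aux g hgc hg0 c hc x
    have hdyx : dist y x ≤ g x / c := by
      rw [le_div_iff₀ hc]
      have := hg0 y
      nlinarith
    have hynot : y ∉ Xs := by
      intro hyX
      have := Metric.infDist_le_dist_of_mem (x := x) hyX
      rw [dist_comm] at this
      linarith
    have hΦy : 0 < Φ y - Φ xstar := by
      rcases lt_or_eq_of_le (hmin y) with h | h
      · linarith
      · exact absurd (fun z => h ▸ hmin z) hynot
    set u := Φ y - Φ xstar with hu
    have hsu : 0 < Real.sqrt u := Real.sqrt_pos.mpr hΦy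
    have hsq : HasDerivAt Real.sqrt (1 / (2 * Real.sqrt u)) u :=
      Real.hasDerivAt_sqrt (ne_of_gt hΦy)
    have hsub : HasFDerivAt (fun z => Φ z - Φ xstar) (fderiv ℝ Φ y) y :=
      ((hdiff y).hasFDerivAt).sub_const (Φ xstar)
    have hgd : HasFDerivAt g ((1 / (2 * Real.sqrt u)) • fderiv ℝ Φ y) y :=
      hsq.comp_hasFDerivAt y hsub
    have hb := fderiv_norm_le_of_min hgd hc.le hy2
    have hns : ‖(1 / (2 * Real.sqrt u)) • fderiv ℝ Φ y‖
        = |1 / (2 * Real.sqrt u)| * ‖fderiv ℝ Φ y‖ := norm_smul _ _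
    rw [hns, abs_of_pos (by positivity)] at hb
    have hfb : ‖fderiv ℝ Φ y‖ ≤ 2 * c * Real.sqrt u := by
      rw [div_mul_eq_mul_div, one_mul, div_le_iff₀ (by positivity)] at hb
      linarith
    have hPLy := hPL y
    rw [hgradnorm y] at hPLy
    have hsq2 : Real.sqrt u ^ 2 = u := Real.sq_sqrt hΦy.le
    have hc2 : μ / 2 ≤ c ^ 2 := by
      have hN : 0 ≤ ‖fderiv ℝ Φ y‖ := norm_nonneg _
      have h4 : ‖fderiv ℝ Φ y‖ ^ 2 ≤ (2 * c * Real.sqrt u) ^ 2 := by nlinarith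
      have h5 : u ≤ 1 / (2 * μ) * (4 * c ^ 2 * u) := by
        calc u ≤ 1 / (2 * μ) * ‖fderiv ℝ Φ y‖ ^ 2 := hPLy
          _ ≤ 1 / (2 * μ) * (4 * c ^ 2 * u) := by
              apply mul_le_mul_of_nonneg_left _ (by positivity)
              nlinarith
      rw [div_mul_eq_mul_div, one_mul, le_div_iff₀ (by linarith)] at h5
      nlinarith
    have : Real.sqrt (μ/2) ≤ c := by
      calc Real.sqrt (μ/2) ≤ Real.sqrt (c ^ 2) := Real.sqrt_le_sqrt hc2
        _ = c := Real.sqrt_sq hc.le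
    linarith
  have hsμ : 0 < Real.sqrt (μ/2) := Real.sqrt_pos.mpr (by linarith)
  have hkey : Metric.infDist x Xs * Real.sqrt (μ/2) ≤ g x := by
    by_contra h
    push_neg at h
    have hI : 0 < Metric.infDist x Xs := by nlinarith [Metric.infDist_nonneg (s := Xs) (x := x)]
    have hlt : g x / Metric.infDist x Xs < Real.sqrt (μ/2) := by
      rw [div_lt_iff₀ hI]; nlinarith
    obtain ⟨c, hc1, hc2⟩ := exists_between hlt
    have hc0 : 0 < c := lt_trans (div_pos hgx hI) hc1
    have := claim c hc0 hc2
    rw [div_lt_iff₀ hI] at hc1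
    rw [le_div_iff₀ hc0] at this
    nlinarith
  have h2mu : (0:ℝ) < 2 * μ := by linarith
  have e1 : Real.sqrt (2*μ) * Real.sqrt (μ/2) = μ := by
    rw [← Real.sqrt_mul h2mu.le]
    rw [show 2*μ*(μ/2) = μ^2 by ring, Real.sqrt_sq hμ.le]
  have e3 : 2*μ*(Φ x - Φ xstar) ≤ ‖gradient Φ x‖^2 := by
    have h := hPL x
    rw [div_mul_eq_mul_div, one_mul, le_div_iff₀ h2mu] at h
    nlinarith
  calc μ * Metric.infDist x Xs
      = Real.sqrt (2*μ) * (Real.sqrt (μ/2) * Metric.infDist x Xs) := by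
        rw [← mul_assoc, e1]
    _ ≤ Real.sqrt (2*μ) * g x := by
        apply mul_le_mul_of_nonneg_left _ (Real.sqrt_nonneg _)
        nlinarith [hkey]
    _ = Real.sqrt (2*μ*(Φ x - Φ xstar)) := by
        rw [hg, Real.sqrt_mul h2mu.le]
    _ ≤ Real.sqrt (‖gradient Φ x‖^2) := Real.sqrt_le_sqrt e3
    _ = ‖gradient Φ x‖ := Real.sqrt_sq (norm_nonneg _)
end

section
/- Let F : X × Y → ℝ where Y ⊆ ℝ^m is nonempty closed convex, F(x,·) is μ-strongly concave and differentiable for each x, and the gradient of F is β-Lipschitz jointly in (x,y). Define y*(x) = argmax_{y∈Y} F(x,y). Then y*(·) is (β/μ)-Lipschitz: ‖y*(x₁) − y*(x₂)‖ ≤ (β/μ)‖x₁ − x₂‖ for all x₁, x₂ ∈ X. -/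
open Set Filter Topology

/-- Quadratic growth at a maximizer of a strongly concave function. -/
lemma strongConcave_quad_growth {E : Type*} [NormedAddCommGroup E] [NormedSpace ℝ E]
    {Y : Set E} {μ : ℝ} {f : E → ℝ} (hf : StrongConcaveOn Y μ f)
    {u v : E} (hu : u ∈ Y) (hv : v ∈ Y) (hmax : IsMaxOn f Y u) :
    f v + μ / 2 * ‖v - u‖ ^ 2 ≤ f u := by
  have key : ∀ t ∈ Ioc (0 : ℝ) 1, f v + (1 - t) * (μ / 2 * ‖v - u‖ ^ 2) ≤ f u := by
    intro t ht
    have ht0 : 0 < t := ht.1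
    have ht1 : t ≤ 1 := ht.2
    have h1t : 0 ≤ 1 - t := by linarith
    have hcomb := hf.2 hv hu ht0.le h1t (by ring)
    have hmemY : t • v + (1 - t) • u ∈ Y := hf.1 hv hu ht0.le h1t (by ring)
    have hle : f (t • v + (1 - t) • u) ≤ f u := hmax hmemY
    have := hcomb.trans hle
    simp only [smul_eq_mul] at this
    nlinarith [this, mul_pos ht0 ht0]
  have htend : Tendsto (fun t : ℝ => f v + (1 - t) * (μ / 2 * ‖v - u‖ ^ 2)) (𝓝[>] (0 : ℝ))
      (𝓝 (f v + (1 - 0) * (μ / 2 * ‖v - u‖ ^ 2))) := by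
    apply Tendsto.mono_left _ nhdsWithin_le_nhds
    exact (tendsto_const_nhds.add (((tendsto_const_nhds.sub tendsto_id)).mul
      tendsto_const_nhds))
  have hev : ∀ᶠ t in 𝓝[>] (0 : ℝ), f v + (1 - t) * (μ / 2 * ‖v - u‖ ^ 2) ≤ f u := by
    filter_upwards [Ioc_mem_nhdsGT_of_mem (by constructor <;> norm_num : (0:ℝ) ∈ Ico (0:ℝ) 1)]
      with t ht using key t ht
  have := le_of_tendsto htend hev
  simpa using this

/-- If `F(x, ·)` is `μ`-strongly concave on a nonempty closed convex set `Y` and the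
gradient of `F` is `β`-Lipschitz jointly in `(x, y)` (blockwise Euclidean formulation),
then the maximizer map `y*(·)` is `(β/μ)`-Lipschitz. -/
theorem maximizer_map_lipschitz
    {d m : ℕ}
    (Y : Set (EuclideanSpace ℝ (Fin m))) (hYne : Y.Nonempty) (hYcl : IsClosed Y)
    (hYconv : Convex ℝ Y)
    (F : EuclideanSpace ℝ (Fin d) → EuclideanSpace ℝ (Fin m) → ℝ)
    (μ β : ℝ) (hμ : 0 < μ) (hβ : 0 < β)
    (hdiff : Differentiable ℝ (fun p : EuclideanSpace ℝ (Fin d) × EuclideanSpace ℝ (Fin m) =>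
      F p.1 p.2))
    (hconc : ∀ x, StrongConcaveOn Y μ (F x))
    (hsmooth : ∀ x₁ y₁ x₂ y₂,
      Real.sqrt (‖gradient (fun x => F x y₁) x₁ - gradient (fun x => F x y₂) x₂‖ ^ 2 +
          ‖gradient (F x₁) y₁ - gradient (F x₂) y₂‖ ^ 2) ≤
        β * Real.sqrt (‖x₁ - x₂‖ ^ 2 + ‖y₁ - y₂‖ ^ 2))
    (ystar : EuclideanSpace ℝ (Fin d) → EuclideanSpace ℝ (Fin m))
    (hmem : ∀ x, ystar x ∈ Y)
    (hmax : ∀ x, IsMaxOn (F x) Y (ystar x)) :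
    ∀ x₁ x₂, ‖ystar x₁ - ystar x₂‖ ≤ β / μ * ‖x₁ - x₂‖ := by
  intro x₁ x₂
  set u := ystar x₁ with hu
  set v := ystar x₂ with hv
  set r := ‖u - v‖ with hr
  -- differentiability of each partial map
  have hdiffx : ∀ x, Differentiable ℝ (F x) := fun x =>
    hdiff.comp ((differentiable_const x).prodMk differentiable_id)
  -- quadratic growth at the two maximizers
  have hq1 : F x₁ v + μ / 2 * ‖v - u‖ ^ 2 ≤ F x₁ u :=
    strongConcave_quad_growth (hconc x₁) (hmem x₁) (hmem x₂) (hmax x₁)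
  have hq2 : F x₂ u + μ / 2 * ‖u - v‖ ^ 2 ≤ F x₂ v :=
    strongConcave_quad_growth (hconc x₂) (hmem x₂) (hmem x₁) (hmax x₂)
  -- the difference function G y = F x₁ y - F x₂ y is (β‖x₁-x₂‖)-Lipschitz
  set G : EuclideanSpace ℝ (Fin m) → ℝ := fun y => F x₁ y - F x₂ y with hG
  have hGdiff : Differentiable ℝ G := (hdiffx x₁).sub (hdiffx x₂)
  have hGbound : ∀ y, ‖fderiv ℝ G y‖ ≤ β * ‖x₁ - x₂‖ := by
    intro y
    have hfd : fderiv ℝ G y = fderiv ℝ (F x₁) y - fderiv ℝ (F x₂) y :=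
      fderiv_sub ((hdiffx x₁) y) ((hdiffx x₂) y)
    have hnorm : ‖fderiv ℝ G y‖ = ‖gradient (F x₁) y - gradient (F x₂) y‖ := by
      rw [hfd]
      unfold gradient
      rw [← map_sub ((InnerProductSpace.toDual ℝ (EuclideanSpace ℝ (Fin m))).symm)]
      rw [LinearIsometryEquiv.norm_map]
    rw [hnorm]
    have h1 := hsmooth x₁ y x₂ y
    have h2 : ‖gradient (F x₁) y - gradient (F x₂) y‖ ≤
        Real.sqrt (‖gradient (fun x => F x y) x₁ - gradient (fun x => F x y) x₂‖ ^ 2 +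
          ‖gradient (F x₁) y - gradient (F x₂) y‖ ^ 2) := by
      rw [show ‖gradient (F x₁) y - gradient (F x₂) y‖ =
          Real.sqrt (‖gradient (F x₁) y - gradient (F x₂) y‖ ^ 2) by
        rw [Real.sqrt_sq (norm_nonneg _)]]
      apply Real.sqrt_le_sqrt
      nlinarith [sq_nonneg ‖gradient (fun x => F x y) x₁ - gradient (fun x => F x y) x₂‖,
        Real.sq_sqrt (sq_nonneg ‖gradient (F x₁) y - gradient (F x₂) y‖)]
    have h3 : Real.sqrt (‖x₁ - x₂‖ ^ 2 + ‖y - y‖ ^ 2) = ‖x₁ - x₂‖ := by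
      simp [Real.sqrt_sq (norm_nonneg _)]
    calc ‖gradient (F x₁) y - gradient (F x₂) y‖ ≤ _ := h2
      _ ≤ β * Real.sqrt (‖x₁ - x₂‖ ^ 2 + ‖y - y‖ ^ 2) := h1
      _ = β * ‖x₁ - x₂‖ := by rw [h3]
  have hGlip : ‖G u - G v‖ ≤ β * ‖x₁ - x₂‖ * ‖u - v‖ :=
    (convex_univ : Convex ℝ (univ : Set (EuclideanSpace ℝ (Fin m)))).norm_image_sub_le_of_norm_fderiv_le
      (fun y _ => hGdiff y) (fun y _ => hGbound y) (mem_univ v) (mem_univ u)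
  -- combine
  have hnormsub : ‖v - u‖ = r := by rw [hr, norm_sub_rev]
  have hkey : μ * r ^ 2 ≤ β * ‖x₁ - x₂‖ * r := by
    have h4 : G u - G v ≤ ‖G u - G v‖ := le_abs_self _
    have : μ * r ^ 2 ≤ G u - G v := by
      simp only [hG]
      rw [hnormsub] at hq1
      nlinarith [hq1, hq2]
    linarith [this.trans (h4.trans hGlip)]
  rcases eq_or_lt_of_le (norm_nonneg (u - v)) with h0 | h0
  · rw [hr, ← h0]
    positivity
  · have h0' : 0 < r := by rw [hr]; exact h0
    rw [div_mul_eq_mul_div, le_div_iff₀ hμ]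
    have := le_of_mul_le_mul_right (by nlinarith : (μ * r) * r ≤ (β * ‖x₁ - x₂‖) * r) h0'
    linarith
end

section
/- Suppose F : X × Y → ℝ is continuously differentiable, β-smooth in (x,y), and μ-strongly concave in y on the compact convex set Y. Then the primal function Φ(x) = max_{y∈Y} F(x,y) is differentiable with ∇Φ(x) = ∇_x F(x, y*(x)), and ∇Φ is (β + β²/μ)-Lipschitz. -/
open Filter Set Asymptotics
open scoped Topology RealInnerProductSpace

variable {E : Type*} [NormedAddCommGroup E] [InnerProductSpace ℝ E] [CompleteSpace E]

/-- Directional difference quotients converge to the inner product with the gradient. -/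
lemma aux_tendsto (f : E → ℝ) (g' y₁ y₂ : E) (hf : HasGradientAt f g' y₁) :
    Tendsto (fun t : ℝ => t⁻¹ * (f (y₁ + t • (y₂ - y₁)) - f y₁)) (𝓝[>] (0:ℝ))
      (𝓝 (⟪g', y₂ - y₁⟫)) := by
  have hline : HasDerivAt (fun t : ℝ => y₁ + t • (y₂ - y₁)) (y₂ - y₁) 0 := by
    simpa using ((hasDerivAt_id (0:ℝ)).smul_const (y₂ - y₁)).const_add y₁
  have hfd : HasFDerivAt f (InnerProductSpace.toDual ℝ E g') y₁ :=
    hasGradientAt_iff_hasFDerivAt.mp hf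
  have hfd' : HasFDerivAt f (InnerProductSpace.toDual ℝ E g')
      ((fun t : ℝ => y₁ + t • (y₂ - y₁)) 0) := by simpa using hfd
  have hcomp : HasDerivAt (fun t : ℝ => f (y₁ + t • (y₂ - y₁))) (⟪g', y₂ - y₁⟫) 0 := by
    have := hfd'.comp_hasDerivAt 0 hline
    simpa [InnerProductSpace.toDual_apply_apply, Function.comp_def] using this
  have := hcomp.tendsto_slope_zero_right
  simpa [smul_eq_mul] using this

/-- First-order optimality condition on a convex set. -/
lemma aux_opt {Y : Set E} (hYconv : Convex ℝ Y) (f : E → ℝ) (g' : E) {y₁ : E}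
    (h₁ : y₁ ∈ Y) (hmax : IsMaxOn f Y y₁) (hf : HasGradientAt f g' y₁) {y₂ : E} (h₂ : y₂ ∈ Y) :
    ⟪g', y₂ - y₁⟫ ≤ 0 := by
  refine le_of_tendsto (aux_tendsto f g' y₁ y₂ hf) ?_
  filter_upwards [Ioc_mem_nhdsGT_of_mem (by norm_num : (0:ℝ) ∈ Ico (0:ℝ) 1)] with t ht
  have hmem : y₁ + t • (y₂ - y₁) ∈ Y := by
    have := hYconv h₁ h₂ (by linarith [ht.2] : (0:ℝ) ≤ 1 - t) ht.1.le (by ring)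
    convert this using 1
    module
  have hle : f (y₁ + t • (y₂ - y₁)) ≤ f y₁ := hmax hmem
  have h1 : (0:ℝ) ≤ t⁻¹ := inv_nonneg.mpr ht.1.le
  nlinarith

/-- First-order inequality for strongly concave functions. -/
lemma aux_sc {Y : Set E} {μ : ℝ} (f : E → ℝ) (hconc : StrongConcaveOn Y μ f)
    {y₁ y₂ : E} (h₁ : y₁ ∈ Y) (h₂ : y₂ ∈ Y) (g' : E) (hf : HasGradientAt f g' y₁) :
    f y₂ - f y₁ + μ / 2 * ‖y₁ - y₂‖ ^ 2 ≤ ⟪g', y₂ - y₁⟫ := by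
  have htarget : Tendsto (fun t : ℝ => f y₂ - f y₁ + (1 - t) * (μ / 2 * ‖y₁ - y₂‖ ^ 2))
      (𝓝[>] (0:ℝ)) (𝓝 (f y₂ - f y₁ + μ / 2 * ‖y₁ - y₂‖ ^ 2)) := by
    have hcont : ContinuousAt (fun t : ℝ => f y₂ - f y₁ + (1 - t) * (μ / 2 * ‖y₁ - y₂‖ ^ 2)) 0 :=
      by fun_prop
    have := hcont.tendsto.mono_left (nhdsWithin_le_nhds (s := Ioi (0:ℝ)))
    simpa using this
  refine le_of_tendsto_of_tendsto htarget (aux_tendsto f g' y₁ y₂ hf) ?_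
  filter_upwards [Ioc_mem_nhdsGT_of_mem (by norm_num : (0:ℝ) ∈ Ico (0:ℝ) 1)] with t ht
  have hcc := hconc.2 h₁ h₂ (by linarith [ht.2] : (0:ℝ) ≤ 1 - t) ht.1.le (by ring)
  have hpt : (1 - t) • y₁ + t • y₂ = y₁ + t • (y₂ - y₁) := by module
  rw [hpt] at hcc
  simp only [smul_eq_mul] at hcc
  have h1 : (0:ℝ) < t⁻¹ := inv_pos.mpr ht.1
  have ht0 : t ≠ 0 := ht.1.ne'
  have : f y₂ - f y₁ + (1 - t) * (μ / 2 * ‖y₁ - y₂‖ ^ 2) ≤ t⁻¹ * (f (y₁ + t • (y₂ - y₁)) - f y₁) := by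
    rw [le_inv_mul_iff₀ ht.1]
    nlinarith [hcc]
  exact this

/-- Quadratic upper bound for functions with Lipschitz gradient. -/
lemma aux_quad (f : E → ℝ) (f' : E → E) (β : ℝ) (hβ : 0 ≤ β)
    (hd : ∀ x, HasGradientAt f (f' x) x) (hL : ∀ u v, ‖f' u - f' v‖ ≤ β * ‖u - v‖)
    (x₁ x₂ : E) : |f x₂ - f x₁ - ⟪f' x₁, x₂ - x₁⟫| ≤ β * ‖x₂ - x₁‖ ^ 2 := by
  set g : E → ℝ := fun x => f x - ⟪f' x₁, x⟫ with hg_def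
  have hg : ∀ x : E, HasFDerivAt g
      (InnerProductSpace.toDual ℝ E (f' x) - InnerProductSpace.toDual ℝ E (f' x₁)) x := by
    intro x
    exact (hasGradientAt_iff_hasFDerivAt.mp (hd x)).sub
      (InnerProductSpace.toDual ℝ E (f' x₁)).hasFDerivAt
  have key := Convex.norm_image_sub_le_of_norm_hasFDerivWithin_le (𝕜 := ℝ)
    (s := Metric.closedBall x₁ ‖x₂ - x₁‖) (f := g) (x := x₁) (y := x₂)
    (fun x _ => (hg x).hasFDerivWithinAt)
    (fun x hx => by
      rw [← map_sub, LinearIsometryEquiv.norm_map]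
      calc ‖f' x - f' x₁‖ ≤ β * ‖x - x₁‖ := hL x x₁
        _ ≤ β * ‖x₂ - x₁‖ := by
            have := Metric.mem_closedBall.mp hx
            rw [dist_eq_norm] at this
            exact mul_le_mul_of_nonneg_left this hβ)
    (convex_closedBall _ _)
    (Metric.mem_closedBall_self (norm_nonneg _))
    (by rw [Metric.mem_closedBall, dist_eq_norm])
  have hgs : g x₂ - g x₁ = f x₂ - f x₁ - ⟪f' x₁, x₂ - x₁⟫ := by
    simp only [hg_def, inner_sub_right]
    ring
  rw [hgs, Real.norm_eq_abs] at key
  calc |f x₂ - f x₁ - ⟪f' x₁, x₂ - x₁⟫| ≤ β * ‖x₂ - x₁‖ * ‖x₂ - x₁‖ := key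
    _ = β * ‖x₂ - x₁‖ ^ 2 := by ring


/-- Smoothness of the primal function: if `F` is continuously differentiable,
`β`-smooth jointly in `(x,y)` and `μ`-strongly concave in `y` on the compact convex
set `Y`, then `Φ(x) = max_{y∈Y} F(x,y)` is differentiable with
`∇Φ(x) = ∇_x F(x, y*(x))` and `∇Φ` is `(β + β²/μ)`-Lipschitz. -/
theorem primal_function_smooth
    {d m : ℕ}
    (Y : Set (EuclideanSpace ℝ (Fin m))) (hYne : Y.Nonempty) (hYcpt : IsCompact Y)
    (hYconv : Convex ℝ Y)
    (F : EuclideanSpace ℝ (Fin d) → EuclideanSpace ℝ (Fin m) → ℝ)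
    (μ β : ℝ) (hμ : 0 < μ) (hβ : 0 < β)
    (hC1 : ContDiff ℝ 1 (fun p : EuclideanSpace ℝ (Fin d) × EuclideanSpace ℝ (Fin m) =>
      F p.1 p.2))
    (hsmooth : ∀ x₁ y₁ x₂ y₂,
      Real.sqrt (‖gradient (fun x => F x y₁) x₁ - gradient (fun x => F x y₂) x₂‖ ^ 2 +
          ‖gradient (F x₁) y₁ - gradient (F x₂) y₂‖ ^ 2) ≤
        β * Real.sqrt (‖x₁ - x₂‖ ^ 2 + ‖y₁ - y₂‖ ^ 2))
    (hconc : ∀ x, StrongConcaveOn Y μ (F x))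
    (ystar : EuclideanSpace ℝ (Fin d) → EuclideanSpace ℝ (Fin m))
    (hmem : ∀ x, ystar x ∈ Y) (hmax : ∀ x, IsMaxOn (F x) Y (ystar x))
    (Φ : EuclideanSpace ℝ (Fin d) → ℝ) (hΦ : ∀ x, Φ x = F x (ystar x)) :
    (∀ x, HasGradientAt Φ (gradient (fun x' => F x' (ystar x)) x) x) ∧
      ∀ x₁ x₂, ‖gradient Φ x₁ - gradient Φ x₂‖ ≤ (β + β ^ 2 / μ) * ‖x₁ - x₂‖ := by
  have hdiffF : Differentiable ℝ (fun p : EuclideanSpace ℝ (Fin d) × EuclideanSpace ℝ (Fin m) =>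
      F p.1 p.2) := hC1.differentiable one_ne_zero
  -- differentiability in each variable
  have hdx : ∀ (y : EuclideanSpace ℝ (Fin m)) (x : EuclideanSpace ℝ (Fin d)),
      HasGradientAt (fun x' => F x' y) (gradient (fun x' => F x' y) x) x := by
    intro y x
    have hda : DifferentiableAt ℝ (fun x' => F x' y) x :=
      DifferentiableAt.comp (f := fun x' => (x', y)) x (hdiffF (x, y))
        (differentiableAt_id.prodMk (differentiableAt_const y))
    exact hda.hasGradientAt
  have hdy : ∀ (x : EuclideanSpace ℝ (Fin d)) (y : EuclideanSpace ℝ (Fin m)),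
      HasGradientAt (F x) (gradient (F x) y) y := by
    intro x y
    have hda := DifferentiableAt.comp (𝕜 := ℝ) y (hdiffF (x, y))
      ((differentiableAt_const x).prodMk differentiableAt_id)
    exact hda.hasGradientAt
  -- consequences of joint smoothness
  have hGx : ∀ x₁ y₁ x₂ y₂,
      ‖gradient (fun x => F x y₁) x₁ - gradient (fun x => F x y₂) x₂‖ ≤
        β * Real.sqrt (‖x₁ - x₂‖ ^ 2 + ‖y₁ - y₂‖ ^ 2) := by
    intro x₁ y₁ x₂ y₂
    refine le_trans ?_ (hsmooth x₁ y₁ x₂ y₂)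
    conv_lhs => rw [← Real.sqrt_sq (norm_nonneg (gradient (fun x => F x y₁) x₁ -
      gradient (fun x => F x y₂) x₂))]
    exact Real.sqrt_le_sqrt (le_add_of_nonneg_right (sq_nonneg _))
  have hGy : ∀ x₁ y₁ x₂ y₂,
      ‖gradient (F x₁) y₁ - gradient (F x₂) y₂‖ ≤
        β * Real.sqrt (‖x₁ - x₂‖ ^ 2 + ‖y₁ - y₂‖ ^ 2) := by
    intro x₁ y₁ x₂ y₂
    refine le_trans ?_ (hsmooth x₁ y₁ x₂ y₂)
    conv_lhs => rw [← Real.sqrt_sq (norm_nonneg (gradient (F x₁) y₁ - gradient (F x₂) y₂))]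
    exact Real.sqrt_le_sqrt (le_add_of_nonneg_left (sq_nonneg _))
  have hsqrt : ∀ a b : ℝ, 0 ≤ a → 0 ≤ b → Real.sqrt (a ^ 2 + b ^ 2) ≤ a + b := by
    intro a b ha hb
    rw [show a + b = Real.sqrt ((a + b) ^ 2) from (Real.sqrt_sq (by linarith)).symm]
    exact Real.sqrt_le_sqrt (by nlinarith)
  have hGxx : ∀ (y : EuclideanSpace ℝ (Fin m)) x₁ x₂,
      ‖gradient (fun x => F x y) x₁ - gradient (fun x => F x y) x₂‖ ≤ β * ‖x₁ - x₂‖ := by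
    intro y x₁ x₂
    have := hGx x₁ y x₂ y
    simpa [Real.sqrt_sq (norm_nonneg (x₁ - x₂))] using this
  have hGxy : ∀ (x : EuclideanSpace ℝ (Fin d)) y₁ y₂,
      ‖gradient (fun x' => F x' y₁) x - gradient (fun x' => F x' y₂) x‖ ≤ β * ‖y₁ - y₂‖ := by
    intro x y₁ y₂
    have := hGx x y₁ x y₂
    simpa [Real.sqrt_sq (norm_nonneg (y₁ - y₂))] using this
  have hGyx : ∀ (y : EuclideanSpace ℝ (Fin m)) x₁ x₂,
      ‖gradient (F x₁) y - gradient (F x₂) y‖ ≤ β * ‖x₁ - x₂‖ := by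
    intro y x₁ x₂
    have := hGy x₁ y x₂ y
    simpa [Real.sqrt_sq (norm_nonneg (x₁ - x₂))] using this
  -- Lipschitz continuity of the maximizer
  have hylip : ∀ x₁ x₂, ‖ystar x₁ - ystar x₂‖ ≤ β / μ * ‖x₁ - x₂‖ := by
    intro x₁ x₂
    have h1 := aux_sc (F x₁) (hconc x₁) (hmem x₁) (hmem x₂)
      (gradient (F x₁) (ystar x₁)) (hdy x₁ (ystar x₁))
    have h2 := aux_sc (F x₁) (hconc x₁) (hmem x₂) (hmem x₁)
      (gradient (F x₁) (ystar x₂)) (hdy x₁ (ystar x₂))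
    have h3 := aux_opt hYconv (F x₁) (gradient (F x₁) (ystar x₁)) (hmem x₁) (hmax x₁)
      (hdy x₁ (ystar x₁)) (hmem x₂)
    have h4 := aux_opt hYconv (F x₂) (gradient (F x₂) (ystar x₂)) (hmem x₂) (hmax x₂)
      (hdy x₂ (ystar x₂)) (hmem x₁)
    have h5 : ⟪gradient (F x₁) (ystar x₂), ystar x₁ - ystar x₂⟫ -
        ⟪gradient (F x₂) (ystar x₂), ystar x₁ - ystar x₂⟫ ≤
        β * ‖x₁ - x₂‖ * ‖ystar x₁ - ystar x₂‖ := by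
      rw [← inner_sub_left]
      calc ⟪gradient (F x₁) (ystar x₂) - gradient (F x₂) (ystar x₂), ystar x₁ - ystar x₂⟫ ≤
          ‖gradient (F x₁) (ystar x₂) - gradient (F x₂) (ystar x₂)‖ * ‖ystar x₁ - ystar x₂‖ :=
            real_inner_le_norm _ _
        _ ≤ β * ‖x₁ - x₂‖ * ‖ystar x₁ - ystar x₂‖ :=
            mul_le_mul_of_nonneg_right (hGyx (ystar x₂) x₁ x₂) (norm_nonneg _)
    have e2 : ‖ystar x₂ - ystar x₁‖ = ‖ystar x₁ - ystar x₂‖ := norm_sub_rev _ _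
    rw [e2] at h2
    have hkey : μ * ‖ystar x₁ - ystar x₂‖ ^ 2 ≤ β * ‖x₁ - x₂‖ * ‖ystar x₁ - ystar x₂‖ := by
      linarith [h1, h2, h3, h4, h5]
    rw [div_mul_eq_mul_div, le_div_iff₀ hμ]
    rcases eq_or_lt_of_le (norm_nonneg (ystar x₁ - ystar x₂)) with hn | hn
    · rw [← hn, zero_mul]
      positivity
    · nlinarith [hkey, hn]
  -- the envelope theorem
  have hgrad : ∀ x, HasGradientAt Φ (gradient (fun x' => F x' (ystar x)) x) x := by
    intro x
    have key : ∀ x', |Φ x' - Φ x - ⟪gradient (fun x' => F x' (ystar x)) x, x' - x⟫| ≤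
        (β + β ^ 2 / μ) * ‖x' - x‖ ^ 2 := by
      intro x'
      set y := ystar x
      set y' := ystar x'
      have hq1 := aux_quad (fun x'' => F x'' y) (fun x'' => gradient (fun x' => F x' y) x'') β
        hβ.le (fun x'' => hdx y x'') (fun u v => hGxx y u v) x x'
      have hq2 := aux_quad (fun x'' => F x'' y') (fun x'' => gradient (fun x' => F x' y') x'') β
        hβ.le (fun x'' => hdx y' x'') (fun u v => hGxx y' u v) x x'
      have hlow : F x' y - F x y ≤ Φ x' - Φ x := by
        rw [hΦ, hΦ]
        have := hmax x' (hmem x)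
        simp only [IsMaxOn, Set.mem_setOf_eq] at this ⊢
        linarith [this]
      have hupp : Φ x' - Φ x ≤ F x' y' - F x y' := by
        rw [hΦ, hΦ]
        have := hmax x (hmem x')
        simp only [IsMaxOn, Set.mem_setOf_eq] at this
        linarith [this]
      have hinner : |⟪gradient (fun x'' => F x'' y') x - gradient (fun x'' => F x'' y) x,
          x' - x⟫| ≤ β ^ 2 / μ * ‖x' - x‖ ^ 2 := by
        calc |⟪gradient (fun x'' => F x'' y') x - gradient (fun x'' => F x'' y) x, x' - x⟫| ≤
            ‖gradient (fun x'' => F x'' y') x - gradient (fun x'' => F x'' y) x‖ * ‖x' - x‖ :=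
              abs_real_inner_le_norm _ _
          _ ≤ (β * ‖y' - y‖) * ‖x' - x‖ :=
              mul_le_mul_of_nonneg_right (hGxy x y' y) (norm_nonneg _)
          _ ≤ (β * (β / μ * ‖x' - x‖)) * ‖x' - x‖ := by
              have := hylip x' x
              gcongr
          _ = β ^ 2 / μ * ‖x' - x‖ ^ 2 := by ring
      have esub : ⟪gradient (fun x'' => F x'' y') x, x' - x⟫ -
          ⟪gradient (fun x'' => F x'' y) x, x' - x⟫ =
          ⟪gradient (fun x'' => F x'' y') x - gradient (fun x'' => F x'' y) x, x' - x⟫ :=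
        (inner_sub_left _ _ _).symm
      have ha1 := abs_le.mp hq1
      have ha2 := abs_le.mp hq2
      have ha3 := abs_le.mp hinner
      have hnn : 0 ≤ β ^ 2 / μ * ‖x' - x‖ ^ 2 := by positivity
      rw [abs_le]
      constructor
      · nlinarith [ha1.1, hlow, hnn]
      · nlinarith [ha2.2, hupp, ha3.2, esub]
    rw [hasGradientAt_iff_isLittleO, Asymptotics.isLittleO_iff]
    intro c hc
    have hC : (0:ℝ) < β + β ^ 2 / μ := by positivity
    filter_upwards [Metric.ball_mem_nhds x (show (0:ℝ) < c / (β + β ^ 2 / μ) by positivity)]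
      with x' hx'
    rw [Metric.mem_ball, dist_eq_norm] at hx'
    rw [Real.norm_eq_abs]
    calc |Φ x' - Φ x - ⟪gradient (fun x'' => F x'' (ystar x)) x, x' - x⟫| ≤
        (β + β ^ 2 / μ) * ‖x' - x‖ ^ 2 := key x'
      _ ≤ c * ‖x' - x‖ := by
          rw [lt_div_iff₀ hC] at hx'
          nlinarith [norm_nonneg (x' - x), hx']
  refine ⟨hgrad, ?_⟩
  intro x₁ x₂
  have e1 : gradient Φ x₁ = gradient (fun x' => F x' (ystar x₁)) x₁ := (hgrad x₁).gradient
  have e2 : gradient Φ x₂ = gradient (fun x' => F x' (ystar x₂)) x₂ := (hgrad x₂).gradient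
  rw [e1, e2]
  calc ‖gradient (fun x' => F x' (ystar x₁)) x₁ - gradient (fun x' => F x' (ystar x₂)) x₂‖ ≤
      β * Real.sqrt (‖x₁ - x₂‖ ^ 2 + ‖ystar x₁ - ystar x₂‖ ^ 2) := hGx x₁ (ystar x₁) x₂ (ystar x₂)
    _ ≤ β * (‖x₁ - x₂‖ + ‖ystar x₁ - ystar x₂‖) :=
        mul_le_mul_of_nonneg_left (hsqrt _ _ (norm_nonneg _) (norm_nonneg _)) hβ.le
    _ ≤ β * (‖x₁ - x₂‖ + β / μ * ‖x₁ - x₂‖) := by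
        have := hylip x₁ x₂
        gcongr
    _ = (β + β ^ 2 / μ) * ‖x₁ - x₂‖ := by ring
end
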